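/- If a is an n×n Hermitian complex matrix with trace p > 0 satisfying ‖a − (p/n)·1ₙ‖² ≤ p²/(n(n−1)) in the Frobenius (Hilbert–Schmidt) norm, then a is positive semidefinite. -/

import Mathlib

open ComplexOrder

set_option maxHeartbeats 1000000 in
lemma aux_nonneg' (n : ℕ) (hn : 2 ≤ n) (p : ℝ) (hp : 0 < p) (l : Fin n → ℝ)
    (hsum : ∑ i, l i = p) (hb : ∑ i, (l i - p / n) ^ 2 ≤ p ^ 2 / ((n : ℝ) * ((n : ℝ) - 1)))
    (k : Fin n) : 0 ≤ l k := by
  by_contra h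
  push_neg at h
  set N : ℝ := (n : ℝ) with hN
  have hN2 : (2 : ℝ) ≤ N := by rw [hN]; exact_mod_cast hn
  have hN0 : (0 : ℝ) < N := by linarith
  have hN1 : (0 : ℝ) < N - 1 := by linarith
  set c : ℝ := p / N with hc
  have hcpos : 0 < c := div_pos hp hN0
  have hcN : c * N = p := by rw [hc]; exact div_mul_cancel₀ p hN0.ne'
  set s := Finset.univ.erase k with hs
  have hcard : (s.card : ℝ) = N - 1 := by
    rw [hs, Finset.card_erase_of_mem (Finset.mem_univ k)]
    simp only [Finset.card_univ, Fintype.card_fin]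
    push_cast [Nat.cast_sub (by omega : 1 ≤ n)]
    ring
  have h1 : (∑ i ∈ s, (l i - c)) ^ 2 ≤ (N - 1) * ∑ i ∈ s, (l i - c) ^ 2 := by
    have := sq_sum_le_card_mul_sum_sq (s := s) (f := fun i => l i - c)
    calc (∑ i ∈ s, (l i - c)) ^ 2 ≤ (s.card : ℝ) * ∑ i ∈ s, (l i - c) ^ 2 := this
    _ = (N - 1) * ∑ i ∈ s, (l i - c) ^ 2 := by rw [hcard]
  have hsum_s : ∑ i ∈ s, (l i - c) = c - l k := by
    have e1 : ∑ i ∈ s, (l i - c) = (∑ i, (l i - c)) - (l k - c) :=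
      Finset.sum_erase_eq_sub (Finset.mem_univ k)
    have e2 : ∑ i, (l i - c) = p - N * c := by
      rw [Finset.sum_sub_distrib, hsum, Finset.sum_const, Finset.card_univ, Fintype.card_fin,
        nsmul_eq_mul]
    rw [e1, e2]
    nlinarith [hcN]
  have h2 : (l k - c) ^ 2 + ∑ i ∈ s, (l i - c) ^ 2 = ∑ i, (l i - c) ^ 2 := by
    rw [hs]
    exact Finset.add_sum_erase _ (fun i => (l i - c) ^ 2) (Finset.mem_univ k)
  have h3 : (∑ i, (l i - c) ^ 2) * (N * (N - 1)) ≤ p ^ 2 := by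
    have := hb
    rw [le_div_iff₀ (by positivity : (0:ℝ) < N * (N - 1))] at this
    exact this
  have hS : (c - l k) ^ 2 / (N - 1) ≤ ∑ i ∈ s, (l i - c) ^ 2 := by
    rw [div_le_iff₀ hN1]
    nlinarith [hsum_s ▸ h1]
  have hkc : c ^ 2 < (l k - c) ^ 2 := by nlinarith
  have hS2 : (c - l k) ^ 2 ≤ (N - 1) * ∑ i ∈ s, (l i - c) ^ 2 := hsum_s ▸ h1
  have hp2 : p ^ 2 = c ^ 2 * N ^ 2 := by rw [← hcN]; ring
  have hA2 : (l k - c) ^ 2 * N ^ 2 ≤ c ^ 2 * N ^ 2 := by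
    nlinarith [mul_le_mul_of_nonneg_left hS2 hN0.le, h3, h2, hp2]
  have hA : (l k - c) ^ 2 ≤ c ^ 2 :=
    le_of_mul_le_mul_right (by nlinarith [hA2]) (by positivity : (0:ℝ) < N ^ 2)
  linarith

lemma trace_conj_unitary' (n : ℕ) (U D : Matrix (Fin n) (Fin n) ℂ)
    (hU : star U * U = 1) : Matrix.trace (U * D * star U) = Matrix.trace D := by
  rw [Matrix.trace_mul_cycle, hU, Matrix.one_mul]

/-- If a Hermitian `n × n` matrix `a` with trace `p > 0` satisfies
`‖a − (p/n)·1‖² ≤ p²/(n(n−1))` in the Frobenius norm, then `a` is positive semidefinite. -/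
theorem stmt_0 (n : ℕ) (hn : 2 ≤ n) (a : Matrix (Fin n) (Fin n) ℂ)
    (ha : a.IsHermitian) (p : ℝ) (hp : 0 < p) (htr : Matrix.trace a = (p : ℂ))
    (hball : Complex.re
        (Matrix.trace ((a - ((p : ℂ) / n) • (1 : Matrix (Fin n) (Fin n) ℂ)) *
          (a - ((p : ℂ) / n) • (1 : Matrix (Fin n) (Fin n) ℂ))))
      ≤ p ^ 2 / ((n : ℝ) * ((n : ℝ) - 1))) :
    a.PosSemidef := by
  set l : Fin n → ℝ := ha.eigenvalues with hl
  set U : Matrix (Fin n) (Fin n) ℂ := (ha.eigenvectorUnitary : Matrix (Fin n) (Fin n) ℂ)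
  set D : Matrix (Fin n) (Fin n) ℂ :=
    Matrix.diagonal (RCLike.ofReal ∘ ha.eigenvalues) with hDdef
  have hU : star U * U = 1 := Matrix.mem_unitaryGroup_iff'.mp (ha.eigenvectorUnitary).2
  have hspec : a = U * D * star U := ha.spectral_theorem
  have h1 : Matrix.trace a = ∑ i, ((l i : ℂ)) := by
    conv_lhs => rw [hspec]
    rw [trace_conj_unitary' n U D hU, hDdef, Matrix.trace_diagonal]
    rfl
  have h2 : Matrix.trace (a * a) = ∑ i, ((l i : ℂ)) ^ 2 := by
    have heq : a * a = U * (D * D) * star U := by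
      conv_lhs => rw [hspec]
      calc U * D * star U * (U * D * star U) = U * D * (star U * U) * D * star U := by
            noncomm_ring
      _ = U * (D * D) * star U := by rw [hU]; noncomm_ring
    conv_lhs => rw [heq]
    rw [trace_conj_unitary' n _ _ hU, hDdef, Matrix.diagonal_mul_diagonal,
      Matrix.trace_diagonal]
    simp [sq, hl]
  have hsumC : (∑ i, (l i : ℂ)) = (p : ℂ) := by rw [← h1, htr]
  have hsumR : ∑ i, l i = p := by
    have : ((∑ i, l i : ℝ) : ℂ) = ((p : ℝ) : ℂ) := by push_cast; rw [hsumC]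
    exact_mod_cast this
  set c : ℂ := (p : ℂ) / n with hc
  have hexp : (a - c • 1) * (a - c • 1) = a * a - c • a - c • a + (c * c) • (1 : Matrix (Fin n) (Fin n) ℂ) := by
    simp only [sub_mul, mul_sub, Matrix.smul_mul, Matrix.mul_smul, mul_one, one_mul, smul_smul]
    abel
  have hNne : ((n : ℂ)) ≠ 0 := by
    exact_mod_cast Nat.cast_ne_zero.mpr (by omega)
  have key : Matrix.trace ((a - c • 1) * (a - c • 1))
      = ((∑ i, (l i - p / n) ^ 2 : ℝ) : ℂ) := by
    rw [hexp]
    rw [Matrix.trace_add, Matrix.trace_sub, Matrix.trace_sub, Matrix.trace_smul,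
      Matrix.trace_smul, Matrix.trace_one, h2, htr]
    push_cast
    rw [Finset.sum_congr rfl (fun i _ => by ring :
      ∀ i ∈ Finset.univ, ((l i : ℂ) - (p : ℂ) / n) ^ 2
        = (l i : ℂ) ^ 2 - 2 * ((p : ℂ)/n) * (l i : ℂ) + ((p : ℂ)/n) ^ 2)]
    rw [Finset.sum_add_distrib, Finset.sum_sub_distrib, ← Finset.mul_sum, hsumC,
      Finset.sum_const, Finset.card_univ, Fintype.card_fin, nsmul_eq_mul]
    simp only [smul_eq_mul, hc]
    ring
  rw [key, Complex.ofReal_re] at hball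
  exact ha.posSemidef_iff_eigenvalues_nonneg.mpr (fun i => aux_nonneg' n hn p hp l hsumR hball i)
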